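/- Let m : ℝ^(1+n) → Sym(n,ℝ) be smooth with m(x) symmetric positive definite for every x, let k : ℝ^(1+n) → ℝⁿ and f : ℝ^(1+n) → ℝ be smooth, and consider the non-degenerate quadratic Lagrangian L(t,q,v) = (1/2) Σ_{i,j} m_{ij}(t,q) v^i v^j + Σ_i k_i(t,q) v^i + f(t,q). Define the degenerate fibre metric g on ℝ^(1+n) by g_{00} = 2f, g_{0i} = g_{i0} = k_i, g_{ij} = m_{ij}, and the Christoffel symbols {_{λμν}} = −(1/2)(∂_λ g_{μν} + ∂_ν g_{μλ} − ∂_μ g_{λν}). Then a smooth curve c : ℝ → ℝⁿ satisfies the Euler–Lagrange equations (d/dt)[∂L/∂v^i(t, c(t), ċ(t))] − ∂L/∂q^i(t, c(t), ċ(t)) = 0 for all i and t if and only if c̈^i(t) = Σ_{k,λ,ν} (m(t,c(t))⁻¹)^{ik} {_{λkν}}(t, c(t)) ċ^λ(t) ċ^ν(t) for all i and t, where ċ⁰ := 1 and c⁰(t) := t. -/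

import Mathlib

set_option maxHeartbeats 2000000

/-- Partial derivative of `f : ℝ^(1+n) → ℝ` in the `μ`-th coordinate direction. -/
noncomputable def pdir {N : ℕ} (f : (Fin N → ℝ) → ℝ) (x : Fin N → ℝ) (μ : Fin N) : ℝ :=
  fderiv ℝ f x (Pi.single μ 1)

lemma fderiv_apply_eq_sum' {N : ℕ} {F : (Fin N → ℝ) → ℝ} {x : Fin N → ℝ}
    (hF : DifferentiableAt ℝ F x) (w : Fin N → ℝ) :
    fderiv ℝ F x w = ∑ lam, w lam * pdir F x lam := by
  have hw : w = ∑ lam : Fin N, w lam • (Pi.single lam 1 : Fin N → ℝ) := by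
    funext j
    simp [Finset.sum_apply, Pi.single_apply]
  conv_lhs => rw [hw]
  rw [map_sum]
  simp [pdir]

lemma hasDerivAt_comp_pdir {N : ℕ} {F : (Fin N → ℝ) → ℝ} (hF : ContDiff ℝ (⊤:ℕ∞) F)
    {u : ℝ → Fin N → ℝ} {u' : Fin N → ℝ} {t : ℝ} (hu : HasDerivAt u u' t) :
    HasDerivAt (fun s => F (u s)) (∑ lam, u' lam * pdir F (u t) lam) t := by
  have hd : DifferentiableAt ℝ F (u t) := (hF.differentiable (by simp) (u t))
  have h1 := hd.hasFDerivAt.comp_hasDerivAt t hu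
  rw [fderiv_apply_eq_sum' hd u'] at h1
  exact h1

lemma quad_fderiv_apply {n : ℕ} (a : Fin n → Fin n → ℝ) (b : Fin n → ℝ) (C : ℝ)
    (v : Fin n → ℝ) (i : Fin n) :
    fderiv ℝ (fun w : Fin n → ℝ =>
        (1/2)*(∑ j, ∑ l, a j l * w j * w l) + (∑ j, b j * w j) + C) v (Pi.single i 1)
      = (1/2)*((∑ l, a i l * v l) + (∑ j, a j i * v j)) + b i := by
  have hD : HasFDerivAt (fun w : Fin n → ℝ =>
      (1/2)*(∑ j, ∑ l, a j l * w j * w l) + (∑ j, b j * w j) + C)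
      ((1/2:ℝ) • (∑ j : Fin n, ∑ l : Fin n, ((a j l * v j) • (ContinuousLinearMap.proj l : (Fin n → ℝ) →L[ℝ] ℝ)
          + v l • ((a j l) • (ContinuousLinearMap.proj j : (Fin n → ℝ) →L[ℝ] ℝ)))
        : (Fin n → ℝ) →L[ℝ] ℝ)
        + (∑ j : Fin n, (b j) • (ContinuousLinearMap.proj j : (Fin n → ℝ) →L[ℝ] ℝ)) + 0) v := by
    refine HasFDerivAt.add (HasFDerivAt.add ?_ ?_) (hasFDerivAt_const _ _)
    · exact (HasFDerivAt.fun_sum fun j _ => HasFDerivAt.fun_sum fun l _ =>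
        (((ContinuousLinearMap.proj j : (Fin n → ℝ) →L[ℝ] ℝ).hasFDerivAt.const_mul (a j l)).mul
          (ContinuousLinearMap.proj l : (Fin n → ℝ) →L[ℝ] ℝ).hasFDerivAt)).const_mul (1/2)
    · exact HasFDerivAt.fun_sum fun j _ =>
        ((ContinuousLinearMap.proj j : (Fin n → ℝ) →L[ℝ] ℝ).hasFDerivAt).const_mul (b j)
  rw [hD.fderiv]
  simp only [ContinuousLinearMap.add_apply, ContinuousLinearMap.smul_apply,
    ContinuousLinearMap.coe_sum', Finset.sum_apply, ContinuousLinearMap.proj_apply,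
    ContinuousLinearMap.zero_apply, Pi.single_apply, smul_eq_mul, mul_ite, mul_one, mul_zero,
    Finset.sum_add_distrib, Finset.sum_ite_irrel, Finset.sum_const_zero,
    Finset.sum_ite_eq, Finset.sum_ite_eq', Finset.mem_univ, if_true, add_zero]
  have e2 : ∑ x1, v x1 * a i x1 = ∑ l, a i l * v l := by
    apply Finset.sum_congr rfl; intros; ring
  rw [e2]; ring

noncomputable def consL (n : ℕ) : (Fin n → ℝ) →L[ℝ] (Fin (n+1) → ℝ) :=
  ContinuousLinearMap.pi (Fin.cases 0 fun j => ContinuousLinearMap.proj j)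

lemma consL_apply {n : ℕ} (e : Fin n → ℝ) : consL n e = Fin.cons 0 e := by
  funext lam
  refine Fin.cases ?_ (fun j => ?_) lam <;>
    simp [consL, ContinuousLinearMap.pi_apply]

lemma consL_single {n : ℕ} (i : Fin n) :
    consL n (Pi.single i 1) = Pi.single i.succ (1:ℝ) := by
  rw [consL_apply]
  funext lam
  refine Fin.cases ?_ (fun j => ?_) lam
  · simp [Pi.single_apply, (Fin.succ_ne_zero i).symm]
  · simp [Pi.single_apply, Fin.succ_inj]

lemma hasFDerivAt_consmap {n : ℕ} (t : ℝ) (q : Fin n → ℝ) :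
    HasFDerivAt (fun q : Fin n → ℝ => (Fin.cons t q : Fin (n+1) → ℝ)) (consL n) q := by
  have : (fun q : Fin n → ℝ => (Fin.cons t q : Fin (n+1) → ℝ))
      = fun q => (Fin.cons t (0:Fin n → ℝ) : Fin (n+1) → ℝ) + consL n q := by
    funext q lam
    refine Fin.cases ?_ (fun j => ?_) lam <;> simp [consL_apply]
  rw [this]
  simpa using (hasFDerivAt_const (Fin.cons t (0:Fin n → ℝ) : Fin (n+1) → ℝ) q).add
    (consL n).hasFDerivAt

lemma fderiv_consmap {n : ℕ} {F : (Fin (n+1) → ℝ) → ℝ} (hF : ContDiff ℝ (⊤:ℕ∞) F)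
    (t : ℝ) (q0 : Fin n → ℝ) (i : Fin n) :
    fderiv ℝ (fun q => F (Fin.cons t q)) q0 (Pi.single i 1)
      = pdir F (Fin.cons t q0) i.succ := by
  have h := ((hF.differentiable (by simp) _).hasFDerivAt.comp q0
    (hasFDerivAt_consmap t q0)).fderiv
  rw [show (fun q => F (Fin.cons t q)) = F ∘ (fun q => Fin.cons t q) from rfl, h]
  simp [ContinuousLinearMap.comp_apply, consL_single, pdir]

lemma pdir_expand {N n : ℕ} (a : (Fin N → ℝ) → Fin n → Fin n → ℝ)
    (ha : ∀ i j, ContDiff ℝ (⊤:ℕ∞) fun x => a x i j)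
    (b : (Fin N → ℝ) → Fin n → ℝ) (hb : ContDiff ℝ (⊤:ℕ∞) b)
    (f : (Fin N → ℝ) → ℝ) (hf : ContDiff ℝ (⊤:ℕ∞) f)
    (v : Fin n → ℝ) (x : Fin N → ℝ) (μ : Fin N) :
    pdir (fun y => (1/2)*(∑ j, ∑ l, a y j l * v j * v l) + (∑ j, b y j * v j) + f y) x μ
      = (1/2)*(∑ j, ∑ l, pdir (fun y => a y j l) x μ * v j * v l)
        + (∑ j, pdir (fun y => b y j) x μ * v j) + pdir f x μ := by
  have hbj : ∀ j : Fin n, ContDiff ℝ (⊤:ℕ∞) fun x => b x j := by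
    intro j
    exact (contDiff_apply ℝ ℝ j).comp hb
  have hD : HasFDerivAt (fun y => (1/2)*(∑ j, ∑ l, a y j l * v j * v l) + (∑ j, b y j * v j) + f y)
      ((1/2:ℝ) • (∑ j : Fin n, ∑ l : Fin n, (v l) • ((v j) • fderiv ℝ (fun y => a y j l) x))
        + (∑ j : Fin n, (v j) • fderiv ℝ (fun y => b y j) x) + fderiv ℝ f x) x := by
    refine HasFDerivAt.add (HasFDerivAt.add ?_ ?_)
      (hf.differentiable (by simp) x).hasFDerivAt
    · exact (HasFDerivAt.fun_sum fun j _ => HasFDerivAt.fun_sum fun l _ =>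
        (((ha j l).differentiable (by simp) x).hasFDerivAt.mul_const (v j)).mul_const
          (v l)).const_mul (1/2)
    · exact HasFDerivAt.fun_sum fun j _ =>
        ((hbj j).differentiable (by simp) x).hasFDerivAt.mul_const (v j)
  show fderiv ℝ _ x (Pi.single μ 1) = _
  rw [hD.fderiv]
  simp only [ContinuousLinearMap.add_apply, ContinuousLinearMap.smul_apply,
    ContinuousLinearMap.coe_sum', Finset.sum_apply, smul_eq_mul, pdir]
  congr 2
  · congr 1
    apply Finset.sum_congr rfl; intro j _
    apply Finset.sum_congr rfl; intro l _
    ring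
  · apply Finset.sum_congr rfl; intro j _
    ring

/-- the Euler–Lagrange equations of the non-degenerate quadratic
Lagrangian `L = (1/2) m_{ij} v^i v^j + k_i v^i + f` are equivalent to the
geodesic-type equation `c̈^i = (m⁻¹)^{ik} {_{λkν}} ċ^λ ċ^ν` (with `ċ⁰ = 1`),
where `{_{λμν}}` are the Christoffel symbols of the degenerate metric `g` with
`g_{00} = 2f`, `g_{0i} = k_i`, `g_{ij} = m_{ij}`. -/
theorem lagrange_equation_iff_geodesic (n : ℕ)
    (m : (Fin (n + 1) → ℝ) → Matrix (Fin n) (Fin n) ℝ)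
    (hm : ∀ i j, ContDiff ℝ (⊤ : ℕ∞) fun x => m x i j)
    (hmpos : ∀ x, (m x).PosDef)
    (k : (Fin (n + 1) → ℝ) → Fin n → ℝ) (hk : ContDiff ℝ (⊤ : ℕ∞) k)
    (f : (Fin (n + 1) → ℝ) → ℝ) (hf : ContDiff ℝ (⊤ : ℕ∞) f)
    (L : ℝ → (Fin n → ℝ) → (Fin n → ℝ) → ℝ)
    (hL : ∀ (t : ℝ) (q v : Fin n → ℝ),
      L t q v = (1 / 2) * (∑ i : Fin n, ∑ j : Fin n, m (Fin.cons t q) i j * v i * v j)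
        + (∑ i : Fin n, k (Fin.cons t q) i * v i) + f (Fin.cons t q))
    (g : (Fin (n + 1) → ℝ) → Fin (n + 1) → Fin (n + 1) → ℝ)
    (hg00 : ∀ x, g x 0 0 = 2 * f x)
    (hg0i : ∀ x (i : Fin n), g x 0 i.succ = k x i)
    (hgi0 : ∀ x (i : Fin n), g x i.succ 0 = k x i)
    (hgij : ∀ x (i j : Fin n), g x i.succ j.succ = m x i j)
    (Chris : (Fin (n + 1) → ℝ) → Fin (n + 1) → Fin (n + 1) → Fin (n + 1) → ℝ)
    (hChris : ∀ x (lam μ ν : Fin (n + 1)),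
      Chris x lam μ ν = -(1 / 2) * (pdir (fun y => g y μ ν) x lam
        + pdir (fun y => g y μ lam) x ν - pdir (fun y => g y lam ν) x μ))
    (c : ℝ → Fin n → ℝ) (hc : ContDiff ℝ (⊤ : ℕ∞) c)
    (γ : ℝ → Fin (n + 1) → ℝ) (hγ : ∀ t, γ t = Fin.cons t (c t)) :
    (∀ (i : Fin n) (t : ℝ),
      deriv (fun s => fderiv ℝ (L s (c s)) (deriv c s) (Pi.single i 1)) t
        - fderiv ℝ (fun q => L t q (deriv c t)) (c t) (Pi.single i 1) = 0) ↔
    (∀ (i : Fin n) (t : ℝ),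
      deriv (deriv c) t i = ∑ k' : Fin n, ∑ lam : Fin (n + 1), ∑ ν : Fin (n + 1),
        (m (γ t))⁻¹ i k' * Chris (γ t) lam k'.succ ν * deriv γ t lam * deriv γ t ν) := by
  have hγfun : γ = fun s => (Fin.cons s (c s) : Fin (n+1) → ℝ) := funext fun t => hγ t
  have hcd : Differentiable ℝ c := hc.differentiable (by simp)
  have hc2 : ContDiff ℝ (⊤:ℕ∞) (deriv c) := (contDiff_infty_iff_deriv.1 hc).2
  have hc2d : Differentiable ℝ (deriv c) := hc2.differentiable (by simp)
  have hki : ∀ i : Fin n, ContDiff ℝ (⊤:ℕ∞) fun x => k x i :=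
    fun i => (contDiff_apply ℝ ℝ i).comp hk
  have msym : ∀ x (i j : Fin n), m x i j = m x j i := by
    intro x i j
    have h := (hmpos x).1
    have := congrFun (congrFun h i) j
    simpa [Matrix.conjTranspose_apply] using this.symm
  have hγt : ∀ t, HasDerivAt γ (Fin.cons 1 (deriv c t)) t := by
    intro t
    have hct : HasDerivAt c (deriv c t) t := (hcd t).hasDerivAt
    rw [hγfun]
    refine hasDerivAt_pi.2 fun lam => ?_
    refine Fin.cases ?_ (fun j => ?_) lam
    · simpa using hasDerivAt_id' t
    · simpa using hasDerivAt_pi.1 hct j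
  have hγderiv : ∀ t, deriv γ t = Fin.cons 1 (deriv c t) := fun t => (hγt t).deriv
  -- step 1 : the momentum
  have hmom : ∀ (i : Fin n) (s : ℝ), fderiv ℝ (L s (c s)) (deriv c s) (Pi.single i 1)
      = (∑ j, m (γ s) i j * deriv c s j) + k (γ s) i := by
    intro i s
    have hfun : L s (c s) = fun v => (1/2)*(∑ j, ∑ l, m (Fin.cons s (c s)) j l * v j * v l)
        + (∑ j, k (Fin.cons s (c s)) j * v j) + f (Fin.cons s (c s)) := funext (hL s (c s))
    rw [hfun, quad_fderiv_apply (a := m (Fin.cons s (c s))), ← hγ s]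
    have e : ∑ j, m (γ s) j i * deriv c s j = ∑ j, m (γ s) i j * deriv c s j :=
      Finset.sum_congr rfl fun j _ => by rw [msym]
    rw [e]; ring
  -- step 2 : time derivative of the momentum
  have hdt : ∀ (i : Fin n) (t : ℝ),
      deriv (fun s => fderiv ℝ (L s (c s)) (deriv c s) (Pi.single i 1)) t
      = (∑ j, ((∑ lam, (Fin.cons 1 (deriv c t) : Fin (n+1) → ℝ) lam * pdir (fun y => m y i j) (γ t) lam) * deriv c t j
          + m (γ t) i j * deriv (deriv c) t j))
        + ∑ lam, (Fin.cons 1 (deriv c t) : Fin (n+1) → ℝ) lam * pdir (fun y => k y i) (γ t) lam := by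
    intro i t
    have hP : HasDerivAt (fun s => (∑ j, m (γ s) i j * deriv c s j) + k (γ s) i)
        ((∑ j, ((∑ lam, (Fin.cons 1 (deriv c t) : Fin (n+1) → ℝ) lam * pdir (fun y => m y i j) (γ t) lam) * deriv c t j
          + m (γ t) i j * deriv (deriv c) t j))
        + ∑ lam, (Fin.cons 1 (deriv c t) : Fin (n+1) → ℝ) lam * pdir (fun y => k y i) (γ t) lam) t := by
      refine HasDerivAt.add (HasDerivAt.fun_sum fun j _ => HasDerivAt.mul ?_ ?_) ?_
      · exact hasDerivAt_comp_pdir (hm i j) (hγt t)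
      · exact hasDerivAt_pi.1 (hc2d t).hasDerivAt j
      · exact hasDerivAt_comp_pdir (hki i) (hγt t)
    have e : (fun s => fderiv ℝ (L s (c s)) (deriv c s) (Pi.single i 1))
        = fun s => (∑ j, m (γ s) i j * deriv c s j) + k (γ s) i := funext (hmom i)
    rw [e, hP.deriv]
  -- step 3 : q-derivative
  have hq : ∀ (i : Fin n) (t : ℝ),
      fderiv ℝ (fun q => L t q (deriv c t)) (c t) (Pi.single i 1)
      = (1/2)*(∑ j, ∑ l, pdir (fun y => m y j l) (γ t) i.succ * deriv c t j * deriv c t l)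
        + (∑ j, pdir (fun y => k y j) (γ t) i.succ * deriv c t j) + pdir f (γ t) i.succ := by
    intro i t
    have hfun : (fun q => L t q (deriv c t)) = fun q =>
        (fun y => (1/2)*(∑ j, ∑ l, m y j l * deriv c t j * deriv c t l)
          + (∑ j, k y j * deriv c t j) + f y) (Fin.cons t q) :=
      funext fun q => hL t q (deriv c t)
    have hG : ContDiff ℝ (⊤:ℕ∞) (fun y : Fin (n+1) → ℝ =>
        (1/2)*(∑ j, ∑ l, m y j l * deriv c t j * deriv c t l)
        + (∑ j, k y j * deriv c t j) + f y) := by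
      refine ContDiff.add (ContDiff.add ?_ ?_) hf
      · exact contDiff_const.mul (ContDiff.sum fun j _ => ContDiff.sum fun l _ =>
          ((hm j l).mul contDiff_const).mul contDiff_const)
      · exact ContDiff.sum fun j _ => (hki j).mul contDiff_const
    rw [hfun, fderiv_consmap hG t (c t) i, ← hγ t,
      pdir_expand m hm k hk f hf (deriv c t) (γ t) i.succ]
  -- pdir of the metric components
  have eg1 : ∀ (j l : Fin n), (fun y => g y j.succ l.succ) = fun y => m y j l :=
    fun j l => funext fun y => hgij y j l
  have eg2 : ∀ (j : Fin n), (fun y => g y 0 j.succ) = fun y => k y j :=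
    fun j => funext fun y => hg0i y j
  have eg3 : ∀ (j : Fin n), (fun y => g y j.succ 0) = fun y => k y j :=
    fun j => funext fun y => hgi0 y j
  have eg4 : (fun y : Fin (n+1) → ℝ => g y 0 0) = fun y => 2 * f y :=
    funext fun y => hg00 y
  have pf2 : ∀ (x : Fin (n+1) → ℝ) μ, pdir (fun y => 2 * f y) x μ = 2 * pdir f x μ := by
    intro x μ
    show fderiv ℝ (fun y => 2 * f y) x _ = _
    rw [fderiv_const_mul (hf.differentiable (by simp) x) 2]
    simp [pdir]
  -- step 4 : value of the Christoffel contraction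
  have hSval : ∀ (i : Fin n) (t : ℝ),
      (∑ lam, ∑ ν, Chris (γ t) lam i.succ ν * deriv γ t lam * deriv γ t ν)
      = -((∑ lam, (Fin.cons 1 (deriv c t) : Fin (n+1) → ℝ) lam * pdir (fun y => k y i) (γ t) lam)
          + (∑ lam, ∑ j, (Fin.cons 1 (deriv c t) : Fin (n+1) → ℝ) lam * pdir (fun y => m y i j) (γ t) lam * deriv c t j))
        + pdir f (γ t) i.succ + (∑ j, pdir (fun y => k y j) (γ t) i.succ * deriv c t j)
        + (1/2)*(∑ j, ∑ l, pdir (fun y => m y j l) (γ t) i.succ * deriv c t j * deriv c t l) := by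
    intro i t
    rw [hγderiv t]
    set u : Fin (n+1) → ℝ := Fin.cons 1 (deriv c t) with hu
    have hu0 : u 0 = 1 := rfl
    have hus : ∀ j : Fin n, u j.succ = deriv c t j := fun j => rfl
    have hterm : ∀ lam ν, Chris (γ t) lam i.succ ν * u lam * u ν
        = -(1/2) * (pdir (fun y => g y i.succ ν) (γ t) lam * u lam * u ν)
          + -(1/2) * (pdir (fun y => g y i.succ lam) (γ t) ν * u lam * u ν)
          - -(1/2) * (pdir (fun y => g y lam ν) (γ t) i.succ * u lam * u ν) := by
      intro lam ν; rw [hChris]; ring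
    have hsplit : (∑ lam, ∑ ν, Chris (γ t) lam i.succ ν * u lam * u ν)
        = -(1/2) * (∑ lam, ∑ ν, pdir (fun y => g y i.succ ν) (γ t) lam * u lam * u ν)
          + -(1/2) * (∑ lam, ∑ ν, pdir (fun y => g y i.succ lam) (γ t) ν * u lam * u ν)
          - -(1/2) * (∑ lam, ∑ ν, pdir (fun y => g y lam ν) (γ t) i.succ * u lam * u ν) := by
      simp only [hterm, Finset.sum_add_distrib, Finset.sum_sub_distrib, ← Finset.mul_sum]
    have hS21 : (∑ lam, ∑ ν, pdir (fun y => g y i.succ lam) (γ t) ν * u lam * u ν)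
        = ∑ lam, ∑ ν, pdir (fun y => g y i.succ ν) (γ t) lam * u lam * u ν := by
      rw [Finset.sum_comm]
      apply Finset.sum_congr rfl; intro lam _
      apply Finset.sum_congr rfl; intro ν _
      ring
    have hS1 : (∑ lam, ∑ ν, pdir (fun y => g y i.succ ν) (γ t) lam * u lam * u ν)
        = (∑ lam, u lam * pdir (fun y => k y i) (γ t) lam)
          + ∑ lam, ∑ j, u lam * pdir (fun y => m y i j) (γ t) lam * deriv c t j := by
      rw [← Finset.sum_add_distrib]
      apply Finset.sum_congr rfl; intro lam _
      rw [Fin.sum_univ_succ]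
      congr 1
      · rw [eg3 i, hu0]; ring
      · apply Finset.sum_congr rfl; intro j _
        rw [eg1 i j, hus j]; ring
    have hS3 : (∑ lam, ∑ ν, pdir (fun y => g y lam ν) (γ t) i.succ * u lam * u ν)
        = 2 * pdir f (γ t) i.succ + (∑ j, pdir (fun y => k y j) (γ t) i.succ * deriv c t j)
          + ((∑ j, pdir (fun y => k y j) (γ t) i.succ * deriv c t j)
            + ∑ j, ∑ l, pdir (fun y => m y j l) (γ t) i.succ * deriv c t j * deriv c t l) := by
      rw [Fin.sum_univ_succ]
      congr 1
      · -- lam = 0 part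
        rw [Fin.sum_univ_succ]
        congr 1
        · rw [eg4, pf2, hu0]; ring
        · apply Finset.sum_congr rfl; intro l _
          rw [eg2 l, hu0, hus l]; ring
      · -- lam = succ j part
        rw [← Finset.sum_add_distrib]
        apply Finset.sum_congr rfl; intro j _
        rw [Fin.sum_univ_succ]
        congr 1
        · rw [eg3 j, hu0, hus j]; ring
        · apply Finset.sum_congr rfl; intro l _
          rw [eg1 j l, hus j, hus l]
    rw [hsplit, hS21, hS1, hS3]
    ring
  -- the key identity : EL expression = m c̈ - Christoffel contraction
  have key : ∀ (i : Fin n) (t : ℝ),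
      deriv (fun s => fderiv ℝ (L s (c s)) (deriv c s) (Pi.single i 1)) t
        - fderiv ℝ (fun q => L t q (deriv c t)) (c t) (Pi.single i 1)
      = (∑ j, m (γ t) i j * deriv (deriv c) t j)
        - (∑ lam, ∑ ν, Chris (γ t) lam i.succ ν * deriv γ t lam * deriv γ t ν) := by
    intro i t
    rw [hdt i t, hq i t, hSval i t]
    rw [Finset.sum_add_distrib]
    have e : (∑ j, (∑ lam, (Fin.cons 1 (deriv c t) : Fin (n+1) → ℝ) lam * pdir (fun y => m y i j) (γ t) lam) * deriv c t j)
        = ∑ lam, ∑ j, (Fin.cons 1 (deriv c t) : Fin (n+1) → ℝ) lam * pdir (fun y => m y i j) (γ t) lam * deriv c t j := by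
      simp only [Finset.sum_mul]
      rw [Finset.sum_comm]
    rw [e]
    ring
  -- final equivalence via invertibility of m
  constructor
  · intro h i t
    have hdet : IsUnit (m (γ t)).det := isUnit_iff_ne_zero.2 (ne_of_gt (hmpos (γ t)).det_pos)
    have hMA : (m (γ t)).mulVec (deriv (deriv c) t)
        = fun i => ∑ lam, ∑ ν, Chris (γ t) lam i.succ ν * deriv γ t lam * deriv γ t ν := by
      funext i'
      have h0 := h i' t
      rw [key i' t] at h0
      have : (∑ j, m (γ t) i' j * deriv (deriv c) t j)
          = ∑ lam, ∑ ν, Chris (γ t) lam i'.succ ν * deriv γ t lam * deriv γ t ν := by linarith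
      simpa [Matrix.mulVec, dotProduct] using this
    have hA : deriv (deriv c) t = (m (γ t))⁻¹.mulVec
        (fun i => ∑ lam, ∑ ν, Chris (γ t) lam i.succ ν * deriv γ t lam * deriv γ t ν) := by
      rw [← hMA, Matrix.mulVec_mulVec, Matrix.nonsing_inv_mul _ hdet, Matrix.one_mulVec]
    rw [congrFun hA i]
    simp only [Matrix.mulVec, dotProduct]
    apply Finset.sum_congr rfl; intro k' _
    rw [Finset.mul_sum]
    apply Finset.sum_congr rfl; intro lam _
    rw [Finset.mul_sum]
    apply Finset.sum_congr rfl; intro ν _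
    ring
  · intro h i t
    have hdet : IsUnit (m (γ t)).det := isUnit_iff_ne_zero.2 (ne_of_gt (hmpos (γ t)).det_pos)
    have hA : deriv (deriv c) t = (m (γ t))⁻¹.mulVec
        (fun i => ∑ lam, ∑ ν, Chris (γ t) lam i.succ ν * deriv γ t lam * deriv γ t ν) := by
      funext i'
      rw [h i' t]
      simp only [Matrix.mulVec, dotProduct]
      apply Finset.sum_congr rfl; intro k' _
      rw [Finset.mul_sum]
      apply Finset.sum_congr rfl; intro lam _
      rw [Finset.mul_sum]
      apply Finset.sum_congr rfl; intro ν _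
      ring
    have hMA : (m (γ t)).mulVec (deriv (deriv c) t)
        = fun i => ∑ lam, ∑ ν, Chris (γ t) lam i.succ ν * deriv γ t lam * deriv γ t ν := by
      rw [hA, Matrix.mulVec_mulVec, Matrix.mul_nonsing_inv _ hdet, Matrix.one_mulVec]
    rw [key i t]
    have := congrFun hMA i
    simp only [Matrix.mulVec, dotProduct] at this
    rw [this]
    ring
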